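/- For every t > 0, Spearman's rho of the distribution F_t equals 12·ln 2 − 9; that is, 12·∫_{0}^{∞}∫_{0}^{∞} (1 − e^{−x})·(1 − (1+y)^{−t})·f_t(x,y) dx dy − 3 = 12·ln 2 − 9. In particular ρ_S is free of the parameter t. -/

import Mathlib

open MeasureTheory Real Filter Set

/-- antiderivative helper -/
lemma antideriv_aux (c : ℝ) (hc : 0 < c) (x : ℝ) :
    HasDerivAt (fun x => -(x/c + 1/c^2) * Real.exp (-(c*x))) (x * Real.exp (-(c*x))) x := by
  have h1 : HasDerivAt (fun x : ℝ => -(x/c + 1/c^2)) (-(1/c)) x := by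
    have := ((hasDerivAt_id x).div_const c).add_const (1/c^2)
    simpa using this.fun_neg
  have h2 : HasDerivAt (fun x : ℝ => Real.exp (-(c*x))) (-c * Real.exp (-(c*x))) x := by
    have h3 : HasDerivAt (fun x : ℝ => -(c*x)) (-c) x := by
      simpa using ((hasDerivAt_id x).const_mul c).fun_neg
    simpa [mul_comm] using h3.exp
  have := h1.mul h2
  convert! this using 1
  have hc' : c ≠ 0 := ne_of_gt hc
  field_simp
  ring

lemma tendsto_aux (c : ℝ) (hc : 0 < c) :
    Filter.Tendsto (fun x => -(x/c + 1/c^2) * Real.exp (-(c*x))) atTop (nhds 0) := by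
  have h1 : Tendsto (fun x : ℝ => x * Real.exp (-(c*x))) atTop (nhds 0) := by
    have := tendsto_rpow_mul_exp_neg_mul_atTop_nhds_zero 1 c hc
    refine this.congr' ?_
    filter_upwards [eventually_gt_atTop (0:ℝ)] with x hx
    rw [Real.rpow_one, neg_mul]
  have h2 : Tendsto (fun x : ℝ => Real.exp (-(c*x))) atTop (nhds 0) := by
    have h3 : Tendsto (fun x : ℝ => c * x) atTop atTop := Filter.Tendsto.const_mul_atTop hc tendsto_id
    have h4 := Real.tendsto_exp_neg_atTop_nhds_zero.comp h3
    simp only [Function.comp_def] at h4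
    exact h4
  have : Tendsto (fun x : ℝ => -(1/c) * (x * Real.exp (-(c*x))) + (-(1/c^2)) * Real.exp (-(c*x)))
      atTop (nhds (-(1/c)*0 + (-(1/c^2))*0)) := (h1.const_mul _).add (h2.const_mul _)
  simp only [mul_zero, add_zero] at this
  refine this.congr fun x => by ring

lemma inner_integrable (s : ℝ) (hs : 0 < s) :
    IntegrableOn (fun x => (1 - Real.exp (-x)) * (x * Real.exp (-(s*x)))) (Set.Ioi (0:ℝ)) := by
  have hs1 : (0:ℝ) < s + 1 := by linarith
  have hderiv : ∀ x ∈ Set.Ici (0:ℝ), HasDerivAt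
      (fun x => -(x/s + 1/s^2) * Real.exp (-(s*x)) - -(x/(s+1) + 1/(s+1)^2) * Real.exp (-((s+1)*x)))
      ((1 - Real.exp (-x)) * (x * Real.exp (-(s*x)))) x := by
    intro x _
    have := (antideriv_aux s hs x).fun_sub (antideriv_aux (s+1) hs1 x)
    convert! this using 1
    rw [show -((s+1)*x) = (-(s*x)) + (-x) by ring, Real.exp_add]
    ring
  have hpos : ∀ x ∈ Set.Ioi (0:ℝ), 0 ≤ (1 - Real.exp (-x)) * (x * Real.exp (-(s*x))) := by
    intro x hx
    have h1 : Real.exp (-x) ≤ 1 := Real.exp_le_one_iff.mpr (by linarith [hx.out])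
    exact mul_nonneg (by linarith) (mul_nonneg (le_of_lt hx.out) (Real.exp_pos _).le)
  have htend := (tendsto_aux s hs).sub (tendsto_aux (s+1) hs1)
  rw [sub_zero] at htend
  exact integrableOn_Ioi_deriv_of_nonneg' hderiv hpos htend

lemma inner_integral (s : ℝ) (hs : 0 < s) :
    ∫ x in Set.Ioi (0:ℝ), (1 - Real.exp (-x)) * (x * Real.exp (-(s*x)))
      = 1/s^2 - 1/(s+1)^2 := by
  have hs1 : (0:ℝ) < s + 1 := by linarith
  have hderiv : ∀ x ∈ Set.Ici (0:ℝ), HasDerivAt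
      (fun x => -(x/s + 1/s^2) * Real.exp (-(s*x)) - -(x/(s+1) + 1/(s+1)^2) * Real.exp (-((s+1)*x)))
      ((1 - Real.exp (-x)) * (x * Real.exp (-(s*x)))) x := by
    intro x _
    have := (antideriv_aux s hs x).fun_sub (antideriv_aux (s+1) hs1 x)
    convert! this using 1
    rw [show -((s+1)*x) = (-(s*x)) + (-x) by ring, Real.exp_add]
    ring
  have hpos : ∀ x ∈ Set.Ioi (0:ℝ), 0 ≤ (1 - Real.exp (-x)) * (x * Real.exp (-(s*x))) := by
    intro x hx
    have h1 : Real.exp (-x) ≤ 1 := Real.exp_le_one_iff.mpr (by linarith [hx.out])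
    exact mul_nonneg (by linarith) (mul_nonneg (le_of_lt hx.out) (Real.exp_pos _).le)
  have htend := (tendsto_aux s hs).sub (tendsto_aux (s+1) hs1)
  rw [sub_zero] at htend
  rw [MeasureTheory.integral_Ioi_of_hasDerivAt_of_nonneg' hderiv hpos htend]
  simp [Real.exp_zero]
  ring

noncomputable def W (s : ℝ) : ℝ := (1 - 1/s) * (1/s^2 - 1/(s+1)^2)

noncomputable def FF (s : ℝ) : ℝ := -(s⁻¹) + 2*((s+1)⁻¹) + (2:ℝ)⁻¹ * (s^2)⁻¹ + Real.log (s/(s+1))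

set_option maxHeartbeats 1000000 in
lemma outer_deriv : ∀ s ∈ Set.Ici (1:ℝ), HasDerivAt FF (W s) s := by
  intro s hs
  have hs0 : (0:ℝ) < s := lt_of_lt_of_le zero_lt_one hs
  have hs1 : (0:ℝ) < s + 1 := by linarith
  have h1 : HasDerivAt (fun s : ℝ => -(s⁻¹)) (-(-1/s^2)) s := by
    have := ((hasDerivAt_id s).fun_inv (ne_of_gt hs0)).fun_neg
    simpa using this
  have h2 : HasDerivAt (fun s : ℝ => (s+1)⁻¹) (-1/(s+1)^2) s := by
    have := ((hasDerivAt_id s).add_const 1).fun_inv (ne_of_gt hs1)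
    simpa using this
  have h3 : HasDerivAt (fun s : ℝ => (s^2)⁻¹) (-(2*s)/(s^2)^2) s := by
    have := (hasDerivAt_pow 2 s).fun_inv (by positivity)
    simpa using this
  have hu : HasDerivAt (fun s : ℝ => s/(s+1)) ((1*(s+1) - s*1)/(s+1)^2) s :=
    (hasDerivAt_id s).div ((hasDerivAt_id s).add_const 1) (ne_of_gt hs1)
  have hlog : HasDerivAt (fun s : ℝ => Real.log (s/(s+1)))
      (((1*(s+1) - s*1)/(s+1)^2) / (s/(s+1))) s := hu.log (by positivity)
  have := ((h1.add (h2.const_mul 2)).add (h3.const_mul (2:ℝ)⁻¹)).add hlog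
  convert! this using 1
  unfold W
  field_simp
  ring

set_option maxHeartbeats 1000000 in
lemma outer_tendsto : Tendsto FF atTop (nhds 0) := by
  have h1 : Tendsto (fun s : ℝ => -(s⁻¹)) atTop (nhds 0) := by
    simpa using (tendsto_inv_atTop_zero (𝕜 := ℝ)).neg
  have h2 : Tendsto (fun s : ℝ => 2*((s+1)⁻¹)) atTop (nhds 0) := by
    have := tendsto_inv_atTop_zero.comp (tendsto_atTop_add_const_right atTop (1:ℝ) tendsto_id)
    simpa using this.const_mul 2
  have h3 : Tendsto (fun s : ℝ => (2:ℝ)⁻¹ * (s^2)⁻¹) atTop (nhds 0) := by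
    have hp : Tendsto (fun s : ℝ => s^2) atTop atTop := tendsto_pow_atTop two_ne_zero
    have := tendsto_inv_atTop_zero.comp hp
    simpa using this.const_mul (2:ℝ)⁻¹
  have h4 : Tendsto (fun s : ℝ => Real.log (s/(s+1))) atTop (nhds 0) := by
    have hd : Tendsto (fun s : ℝ => s/(s+1)) atTop (nhds 1) := by
      have hnum : Tendsto (fun s : ℝ => 1 + 1/s) atTop (nhds 1) := by
        have h5 : Tendsto (fun s : ℝ => 1 + s⁻¹) atTop (nhds (1 + 0)) :=
          tendsto_const_nhds.add tendsto_inv_atTop_zero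
        rw [add_zero] at h5
        simpa [one_div] using h5
      have hinv : Tendsto (fun s : ℝ => (1 + 1/s)⁻¹) atTop (nhds 1) := by
        simpa using hnum.inv₀ one_ne_zero
      refine hinv.congr' ?_
      filter_upwards [eventually_gt_atTop (0:ℝ)] with s hsp
      have hs1 : s + 1 ≠ 0 := by positivity
      field_simp
    have := (Real.continuousAt_log one_ne_zero).tendsto.comp hd
    simpa [Real.log_one, Function.comp_def] using this
  have := ((h1.add h2).add h3).add h4
  simp only [add_zero] at this
  exact this

lemma outer_nonneg : ∀ s ∈ Set.Ioi (1:ℝ), 0 ≤ W s := by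
  intro s hs
  have hs1 : (1:ℝ) < s := hs
  have hs0 : (0:ℝ) < s := by linarith
  have h1 : 1/s ≤ 1 := by rw [div_le_one hs0]; linarith
  have h2 : 1/(s+1)^2 ≤ 1/s^2 := by
    apply one_div_le_one_div_of_le (by positivity)
    nlinarith
  exact mul_nonneg (by linarith) (by linarith)

lemma outer_integral : ∫ s in Set.Ioi (1:ℝ), W s = Real.log 2 - 1/2 := by
  rw [MeasureTheory.integral_Ioi_of_hasDerivAt_of_nonneg'
    outer_deriv outer_nonneg outer_tendsto]
  unfold FF
  rw [Real.log_div one_ne_zero (by norm_num)]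
  norm_num
  ring

lemma outer_integrableOn : IntegrableOn W (Set.Ioi (1:ℝ)) :=
  integrableOn_Ioi_deriv_of_nonneg' outer_deriv outer_nonneg outer_tendsto

lemma rpow_hasDerivAt (t : ℝ) (y : ℝ) (hy : 0 < 1 + y) :
    HasDerivAt (fun y : ℝ => (1+y)^t) (t*(1+y)^(t-1)) y := by
  have hb : HasDerivAt (fun y : ℝ => 1+y) 1 y := (hasDerivAt_id y).const_add 1
  have := (Real.hasDerivAt_rpow_const (x := 1+y) (p := t) (Or.inl (ne_of_gt hy))).comp y hb
  simpa [Function.comp_def] using this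

lemma img_eq (t : ℝ) (ht : 0 < t) :
    (fun y : ℝ => (1+y)^t) '' (Set.Ioi 0) = Set.Ioi (1:ℝ) := by
  ext s
  constructor
  · rintro ⟨y, hy, rfl⟩
    have hy0 : (0:ℝ) < y := hy
    exact (Real.one_lt_rpow_iff_of_pos (by linarith)).mpr (Or.inl ⟨by linarith, ht⟩)
  · intro hs
    have hs1 : (1:ℝ) < s := hs
    have hs0 : (0:ℝ) < s := by linarith
    have h1 : 1 < s ^ (1/t) := (Real.one_lt_rpow_iff_of_pos hs0).mpr (Or.inl ⟨hs1, by positivity⟩)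
    refine ⟨s ^ (1/t) - 1, by simpa using h1, ?_⟩
    show (1 + (s ^ (1/t) - 1)) ^ t = s
    have h2 : (1 + (s ^ (1/t) - 1)) = s ^ (1/t) := by ring
    rw [h2, ← Real.rpow_mul hs0.le, one_div, inv_mul_cancel₀ (ne_of_gt ht), Real.rpow_one]

lemma subst_integral (t : ℝ) (ht : 0 < t) :
    ∫ y in Set.Ioi (0:ℝ), t * (1+y)^(t-1) * W ((1+y)^t) = Real.log 2 - 1/2 := by
  have hderiv : ∀ y ∈ Set.Ioi (0:ℝ), HasDerivWithinAt (fun y : ℝ => (1+y)^t)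
      (t*(1+y)^(t-1)) (Set.Ioi 0) y := fun y hy =>
    (rpow_hasDerivAt t y (by linarith [hy.out])).hasDerivWithinAt
  have hinj : Set.InjOn (fun y : ℝ => (1+y)^t) (Set.Ioi 0) := by
    have hmono : StrictMonoOn (fun y : ℝ => (1+y)^t) (Set.Ioi 0) := fun a ha b hb hab =>
      Real.rpow_lt_rpow (by linarith [ha.out]) (by linarith) ht
    exact hmono.injOn
  have := MeasureTheory.integral_image_eq_integral_abs_deriv_smul measurableSet_Ioi hderiv hinj W
  rw [img_eq t ht, outer_integral] at this
  rw [this]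
  apply MeasureTheory.setIntegral_congr_fun measurableSet_Ioi
  intro y hy
  have h1 : (0:ℝ) < (1+y)^(t-1) := Real.rpow_pos_of_pos (by linarith [hy.out]) _
  simp only [smul_eq_mul, abs_of_pos (mul_pos ht h1)]

/-- For every `t > 0`, the bivariate distribution with density
`f_t(x,y) = t·x·(1+y)^{t−1}·e^{−x(1+y)^t}` on `(0,∞)²`, exponential marginal
`H(x) = 1 − e^{−x}` and Pareto marginal `G_t(y) = 1 − (1+y)^{−t}` has Spearman's rho
equal to `12·ln 2 − 9`:
`12·∫_{(0,∞)²} (1 − e^{−x})·(1 − (1+y)^{−t})·f_t(x,y) dx dy − 3 = 12·ln 2 − 9`.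
In particular `ρ_S` is free of the parameter `t`. -/
theorem spearman_rho_exponential_pareto_family
    (t : ℝ) (ht : 0 < t)
    (f : ℝ → ℝ → ℝ)
    (hf : ∀ x y, f x y = t * x * (1 + y) ^ (t - 1) * Real.exp (-x * (1 + y) ^ t)) :
    12 * (∫ p in Set.Ioi (0 : ℝ) ×ˢ Set.Ioi (0 : ℝ),
        (1 - Real.exp (-p.1)) * (1 - (1 + p.2) ^ (-t)) * f p.1 p.2) - 3
      = 12 * Real.log 2 - 9 := by
  set G : ℝ × ℝ → ℝ := fun p =>
    (1 - Real.exp (-p.1)) * (1 - (1 + p.2) ^ (-t)) *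
      (t * p.1 * (1 + p.2) ^ (t - 1) * Real.exp (-p.1 * (1 + p.2) ^ t)) with hG
  have hGmeas : Measurable G := by
    rw [hG]; fun_prop
  -- per-slice description
  have hslice : ∀ y : ℝ, 0 < y → (fun x => G (x, y)) =
      fun x => ((1 - (1+y)^(-t)) * (t * (1+y)^(t-1))) *
        ((1 - Real.exp (-x)) * (x * Real.exp (-((1+y)^t * x)))) := by
    intro y hy
    funext x
    rw [hG]
    simp only []
    rw [show -x * (1+y)^t = -((1+y)^t * x) by ring]
    ring
  have hsliceInt : ∀ y : ℝ, 0 < y → IntegrableOn (fun x => G (x, y)) (Set.Ioi 0) := by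
    intro y hy
    rw [hslice y hy]
    exact (inner_integrable _ (Real.rpow_pos_of_pos (by linarith) t)).const_mul _
  have hsliceVal : ∀ y : ℝ, 0 < y → ∫ x in Set.Ioi (0:ℝ), G (x, y)
      = t * (1+y)^(t-1) * W ((1+y)^t) := by
    intro y hy
    rw [hslice y hy, MeasureTheory.integral_const_mul,
      inner_integral _ (Real.rpow_pos_of_pos (by linarith) t)]
    have h1 : (1+y) ^ (-t) = ((1+y)^t)⁻¹ := Real.rpow_neg (by linarith) t
    rw [W, h1]
    rw [one_div ((1+y)^t)]
    ring
  have hGnonneg : ∀ y : ℝ, 0 < y → ∀ x ∈ Set.Ioi (0:ℝ), 0 ≤ G (x, y) := by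
    intro y hy x hx
    have hx0 : (0:ℝ) < x := hx
    have h1 : Real.exp (-x) ≤ 1 := Real.exp_le_one_iff.mpr (by linarith)
    have h2 : (1+y) ^ (-t) ≤ 1 :=
      Real.rpow_le_one_of_one_le_of_nonpos (by linarith) (by linarith)
    have h3 : (0:ℝ) < (1+y)^(t-1) := Real.rpow_pos_of_pos (by linarith) _
    rw [hG]
    have := Real.exp_pos (-x * (1+y)^t)
    apply mul_nonneg (mul_nonneg (by linarith) (by linarith))
    positivity
  -- bound function
  have hcW : ∀ y : ℝ, 0 < y → t * (1+y)^(t-1) * W ((1+y)^t) ≤ t * (1+y)^(-t-1) := by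
    intro y hy
    have hb : (1:ℝ) < 1 + y := by linarith
    have hb0 : (0:ℝ) < 1 + y := by linarith
    have hs : (0:ℝ) < (1+y)^t := Real.rpow_pos_of_pos hb0 t
    have hs1 : (1:ℝ) ≤ (1+y)^t := Real.one_le_rpow hb.le ht.le
    have h3 : (0:ℝ) < (1+y)^(t-1) := Real.rpow_pos_of_pos hb0 _
    have hW : W ((1+y)^t) ≤ 1/((1+y)^t)^2 := by
      rw [W]
      have h4 : 1/((1+y)^t) ≤ 1 := by
        rw [div_le_one hs]; exact hs1
      have h4' : 0 ≤ 1/((1+y)^t) := by positivity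
      have h5 : 0 ≤ 1/((1+y)^t)^2 - 1/((1+y)^t+1)^2 := by
        have : 1/((1+y)^t+1)^2 ≤ 1/((1+y)^t)^2 := by
          apply one_div_le_one_div_of_le (by positivity)
          nlinarith
        linarith
      have h6 : 1/((1+y)^t)^2 - 1/((1+y)^t+1)^2 ≤ 1/((1+y)^t)^2 := by
        have : (0:ℝ) ≤ 1/((1+y)^t+1)^2 := by positivity
        linarith
      calc (1 - 1/((1+y)^t)) * (1/((1+y)^t)^2 - 1/((1+y)^t+1)^2)
          ≤ 1 * (1/((1+y)^t)^2 - 1/((1+y)^t+1)^2) :=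
            mul_le_mul_of_nonneg_right (by linarith) h5
        _ = 1/((1+y)^t)^2 - 1/((1+y)^t+1)^2 := one_mul _
        _ ≤ 1/((1+y)^t)^2 := h6
    calc t * (1+y)^(t-1) * W ((1+y)^t) ≤ t * (1+y)^(t-1) * (1/((1+y)^t)^2) := by
          apply mul_le_mul_of_nonneg_left hW (by positivity)
      _ = t * (1+y)^(-t-1) := by
          rw [← Real.rpow_natCast ((1+y)^t) 2, ← Real.rpow_mul hb0.le]
          rw [show ((2:ℕ):ℝ) = 2 by norm_num]
          rw [one_div, ← Real.rpow_neg hb0.le]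
          rw [mul_assoc, ← Real.rpow_add hb0]
          ring_nf
  -- integrable bound
  have hbound : IntegrableOn (fun y : ℝ => t * (1+y)^(-t-1)) (Set.Ioi (0:ℝ)) := by
    have hderiv : ∀ y ∈ Set.Ici (0:ℝ), HasDerivAt (fun y : ℝ => -((1+y)^(-t)))
        (t * (1+y)^(-t-1)) y := by
      intro y hy
      have := (rpow_hasDerivAt (-t) y (by simp at hy; linarith)).fun_neg
      simpa [neg_mul, neg_neg] using this
    have hpos : ∀ y ∈ Set.Ioi (0:ℝ), 0 ≤ t * (1+y)^(-t-1) := by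
      intro y hy
      exact mul_nonneg ht.le (Real.rpow_pos_of_pos (by linarith [hy.out]) _).le
    have htend : Filter.Tendsto (fun y : ℝ => -((1+y)^(-t))) atTop (nhds 0) := by
      have h1 : Filter.Tendsto (fun y : ℝ => 1 + y) atTop atTop :=
        tendsto_atTop_add_const_left atTop 1 tendsto_id
      have := (tendsto_rpow_neg_atTop ht).comp h1
      simpa [Function.comp] using this.neg
    exact integrableOn_Ioi_deriv_of_nonneg' hderiv hpos htend
  -- Fubini integrability
  have hInt : Integrable G
      ((volume.restrict (Set.Ioi 0)).prod (volume.restrict (Set.Ioi 0))) := by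
    rw [MeasureTheory.integrable_prod_iff' hGmeas.aestronglyMeasurable]
    constructor
    · filter_upwards [ae_restrict_mem measurableSet_Ioi] with y hy
      exact hsliceInt y hy
    · apply MeasureTheory.Integrable.mono' hbound
      · exact (hGmeas.norm.stronglyMeasurable.integral_prod_left').aestronglyMeasurable
      · filter_upwards [ae_restrict_mem measurableSet_Ioi] with y hy
        have hnn : 0 ≤ ∫ x in Set.Ioi (0:ℝ), ‖G (x, y)‖ :=
          MeasureTheory.integral_nonneg fun x => norm_nonneg _
        rw [Real.norm_of_nonneg hnn]
        have heq : ∫ x in Set.Ioi (0:ℝ), ‖G (x, y)‖ = ∫ x in Set.Ioi (0:ℝ), G (x, y) := by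
          apply MeasureTheory.setIntegral_congr_fun measurableSet_Ioi
          intro x hx
          exact Real.norm_of_nonneg (hGnonneg y hy x hx)
        rw [heq, hsliceVal y hy]
        exact hcW y hy
  have h0 : (∫ p in Set.Ioi (0:ℝ) ×ˢ Set.Ioi (0:ℝ),
      (1 - Real.exp (-p.1)) * (1 - (1 + p.2) ^ (-t)) * f p.1 p.2)
      = ∫ p in Set.Ioi (0:ℝ) ×ˢ Set.Ioi (0:ℝ), G p := by
    apply MeasureTheory.setIntegral_congr_fun (measurableSet_Ioi.prod measurableSet_Ioi)
    intro p hp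
    simp only [hG, hf]
  have h1 : (∫ p in Set.Ioi (0:ℝ) ×ˢ Set.Ioi (0:ℝ), G p)
      = ∫ y in Set.Ioi (0:ℝ), ∫ x in Set.Ioi (0:ℝ), G (x, y) := by
    rw [MeasureTheory.Measure.volume_eq_prod, ← MeasureTheory.Measure.prod_restrict,
      MeasureTheory.integral_prod_symm G hInt]
  have h2 : (∫ y in Set.Ioi (0:ℝ), ∫ x in Set.Ioi (0:ℝ), G (x, y))
      = ∫ y in Set.Ioi (0:ℝ), t * (1+y)^(t-1) * W ((1+y)^t) := by
    apply MeasureTheory.integral_congr_ae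
    filter_upwards [ae_restrict_mem measurableSet_Ioi] with y hy
    exact hsliceVal y hy
  rw [h0, h1, h2, subst_integral t ht]
  ring
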